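/- Suppose Assumption 5 holds. Then there exists a real number C₁ ∈ [1,∞) such that ∫ ψ̃(z') S(z,dz') ≤ C₁ and |S^n − σ|(z,B) ≤ C₁ ρ^n for all z ∈ Z, Borel B ⊆ Z and n ≥ 0, where |S^n − σ|(z,·) denotes the total variation of the signed measure S^n(z,·) − σ and ρ is the ergodicity rate from Assumption 5. -/

import Mathlib

open MeasureTheory Filter Topology
open scoped ENNReal

noncomputable section

namespace Stmt6

/-- Total variation of a complex-valued set function `m` on the set `B`:
the supremum of `∑ |m(Aᵢ)|` over finite disjoint measurable families `Aᵢ ⊆ B`. -/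
def setVar {α : Type*} [MeasurableSpace α] (m : Set α → ℂ) (B : Set α) : ℝ :=
  sSup {r : ℝ | ∃ (k : ℕ) (A : Fin k → Set α),
    (∀ i, MeasurableSet (A i)) ∧ (∀ i j, i ≠ j → Disjoint (A i) (A j)) ∧
    (∀ i, A i ⊆ B) ∧ r = ∑ i, ‖m (A i)‖}

/-- `n`-step iterates `S^n(z, ⬝)` of a transition kernel `S`. -/
def kernelIter {α : Type*} [MeasurableSpace α] (S : α → Measure α) : ℕ → α → Measure α
  | 0, z => Measure.dirac z
  | n + 1, z => (S z).bind (kernelIter S n)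

variable {dx dy : ℕ}

/-- The transition kernel `S((y,x), ⬝)` of the joint chain `{(Y_n, X_n)}`. -/
def Skernel (XS : Set (Fin dx → ℝ)) (YS : Set (Fin dy → ℝ))
    (P : XS → Measure XS) (Q : XS → Measure YS) (z : YS × XS) : Measure (YS × XS) :=
  (P z.2).bind fun x' => (Q x').map fun y' => (y', x')

/-- The invariant distribution `σ(dz)` of the joint chain. -/
def sigmaJoint (XS : Set (Fin dx → ℝ)) (YS : Set (Fin dy → ℝ))
    (Q : XS → Measure YS) (πm : Measure XS) : Measure (YS × XS) :=
  πm.bind fun x => (Q x).map fun y => (y, x)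

section Aux

open scoped ENNReal

/-- Key one-sided total-variation bound for `lintegral`s of functions bounded by `1`. -/
lemma lintegral_toReal_sub_le {α : Type*} [MeasurableSpace α]
    (μ ν : Measure α) [IsFiniteMeasure μ] [IsFiniteMeasure ν]
    {ε : ℝ}
    (h : ∀ B : Set α, MeasurableSet B → (μ B).toReal - (ν B).toReal ≤ ε)
    {f : α → ℝ≥0∞} (hf : Measurable f) (hf1 : ∀ x, f x ≤ 1) :
    (∫⁻ x, f x ∂μ).toReal - (∫⁻ x, f x ∂ν).toReal ≤ ε := by
  set s : SignedMeasure α := μ.toSignedMeasure - ν.toSignedMeasure with hsdef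
  obtain ⟨i, hi₁, hi₂, hi₃, hp, hq⟩ := s.toJordanDecomposition_spec
  set p : Measure α := s.toJordanDecomposition.posPart with hpdef
  set q : Measure α := s.toJordanDecomposition.negPart with hqdef
  have hsB : ∀ B : Set α, MeasurableSet B → s B = (μ B).toReal - (ν B).toReal := fun B hB =>
    Measure.toSignedMeasure_sub_apply hB
  have hjB : ∀ B : Set α, MeasurableSet B → s B = (p B).toReal - (q B).toReal := by
    intro B hB
    conv_lhs => rw [← s.toSignedMeasure_toJordanDecomposition,
      JordanDecomposition.toSignedMeasure]
    exact Measure.toSignedMeasure_sub_apply hB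
  have hmeq : μ + q = ν + p := by
    ext B hB
    have h1 := hsB B hB
    have h2 := hjB B hB
    have h3 : (μ B).toReal + (q B).toReal = (ν B).toReal + (p B).toReal := by linarith
    rw [Measure.add_apply, Measure.add_apply]
    rw [← ENNReal.toReal_eq_toReal_iff' (by finiteness) (by finiteness)]
    rw [ENNReal.toReal_add (measure_ne_top _ _) (measure_ne_top _ _),
      ENNReal.toReal_add (measure_ne_top _ _) (measure_ne_top _ _)]
    exact h3
  have hbnd : ∀ m : Measure α, ∫⁻ x, f x ∂m ≤ m Set.univ := by
    intro m
    calc ∫⁻ x, f x ∂m ≤ ∫⁻ _, 1 ∂m := lintegral_mono hf1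
    _ = m Set.univ := by simp
  have hne : ∀ (m : Measure α) [IsFiniteMeasure m], ∫⁻ x, f x ∂m ≠ ∞ := by
    intro m hm
    exact ((hbnd m).trans_lt (measure_lt_top m _)).ne
  have hint : ∫⁻ x, f x ∂μ + ∫⁻ x, f x ∂q = ∫⁻ x, f x ∂ν + ∫⁻ x, f x ∂p := by
    rw [← lintegral_add_measure, ← lintegral_add_measure, hmeq]
  have hintR : (∫⁻ x, f x ∂μ).toReal + (∫⁻ x, f x ∂q).toReal
      = (∫⁻ x, f x ∂ν).toReal + (∫⁻ x, f x ∂p).toReal := by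
    rw [← ENNReal.toReal_add (hne μ) (hne q), ← ENNReal.toReal_add (hne ν) (hne p), hint]
  have hpuniv : (p Set.univ).toReal ≤ ε := by
    have heq : (p Set.univ).toReal = s (i ∩ Set.univ) := by
      rw [hp, SignedMeasure.toMeasureOfZeroLE_apply s hi₂ hi₁ MeasurableSet.univ]
      simp
    rw [heq, Set.inter_univ]
    calc s i = (μ i).toReal - (ν i).toReal := hsB i hi₁
    _ ≤ ε := h i hi₁
  have h4 : (∫⁻ x, f x ∂p).toReal ≤ ε :=
    (ENNReal.toReal_mono (measure_ne_top p _) (hbnd p)).trans hpuniv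
  have h5 : 0 ≤ (∫⁻ x, f x ∂q).toReal := ENNReal.toReal_nonneg
  linarith

/-- The total variation `setVar` of the difference of two finite measures is bounded by
twice a uniform bound on the pointwise differences. -/
lemma setVar_sub_le {α : Type*} [MeasurableSpace α]
    (μ ν : Measure α) [IsFiniteMeasure μ] [IsFiniteMeasure ν]
    {ε : ℝ} (hε : 0 ≤ ε)
    (h : ∀ D : Set α, MeasurableSet D → |(μ D).toReal - (ν D).toReal| ≤ ε) (B : Set α) :
    setVar (fun A => (((μ A).toReal - (ν A).toReal : ℝ) : ℂ)) B ≤ 2 * ε := by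
  classical
  apply Real.sSup_le _ (by linarith)
  rintro r ⟨k, A, hAm, hAd, hAB, rfl⟩
  show ∑ i, ‖(((μ (A i)).toReal - (ν (A i)).toReal : ℝ) : ℂ)‖ ≤ 2 * ε
  set f : Fin k → ℝ := fun i => (μ (A i)).toReal - (ν (A i)).toReal with hfdef
  have key : ∀ s : Finset (Fin k), |∑ i ∈ s, f i| ≤ ε := by
    intro s
    have hpd : (↑s : Set (Fin k)).PairwiseDisjoint A := fun i _ j _ hij => hAd i j hij
    have hμ : μ (⋃ i ∈ s, A i) = ∑ i ∈ s, μ (A i) :=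
      measure_biUnion_finset hpd (fun i _ => hAm i)
    have hν : ν (⋃ i ∈ s, A i) = ∑ i ∈ s, ν (A i) :=
      measure_biUnion_finset hpd (fun i _ => hAm i)
    have hsum : ∑ i ∈ s, f i
        = (μ (⋃ i ∈ s, A i)).toReal - (ν (⋃ i ∈ s, A i)).toReal := by
      rw [hμ, hν, ENNReal.toReal_sum (fun i _ => measure_ne_top μ _),
        ENNReal.toReal_sum (fun i _ => measure_ne_top ν _), ← Finset.sum_sub_distrib]
    rw [hsum]
    exact h _ (s.measurableSet_biUnion (fun i _ => hAm i))
  calc ∑ i, ‖((f i : ℝ) : ℂ)‖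
      = ∑ i, |f i| := Finset.sum_congr rfl fun i _ => by simp
    _ = (∑ i ∈ Finset.univ.filter (fun i => 0 ≤ f i), |f i|)
        + ∑ i ∈ Finset.univ.filter (fun i => ¬ 0 ≤ f i), |f i| :=
        (Finset.sum_filter_add_sum_filter_not _ _ _).symm
    _ ≤ ε + ε := by
        refine add_le_add ?_ ?_
        · have he : ∀ i ∈ Finset.univ.filter (fun i => 0 ≤ f i), |f i| = f i :=
            fun i hi => abs_of_nonneg (Finset.mem_filter.mp hi).2
          rw [Finset.sum_congr rfl he]
          exact (abs_le.mp (key _)).2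
        · have he : ∀ i ∈ Finset.univ.filter (fun i => ¬ 0 ≤ f i), |f i| = -(f i) :=
            fun i hi => abs_of_neg (not_le.mp (Finset.mem_filter.mp hi).2)
          rw [Finset.sum_congr rfl he, Finset.sum_neg_distrib]
          have := (abs_le.mp (key (Finset.univ.filter (fun i => ¬ 0 ≤ f i)))).1
          linarith
    _ = 2 * ε := by ring

/-- The bind of a probability measure along a kernel of probability measures is a
probability measure. -/
lemma isProbabilityMeasure_bind {α β : Type*} [MeasurableSpace α] [MeasurableSpace β]
    (m : Measure α) [IsProbabilityMeasure m] {f : α → Measure β} (hf : Measurable f)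
    (hp : ∀ a, IsProbabilityMeasure (f a)) : IsProbabilityMeasure (m.bind f) := by
  constructor
  rw [Measure.bind_apply MeasurableSet.univ hf.aemeasurable]
  have h1 : ∀ a, f a Set.univ = 1 := fun a => (hp a).measure_univ
  simp [h1]

end Aux

/-- **Lemma 2.3**: under Assumption 5 there is `C₁ ∈ [1,∞)` with
`∫ ψ̃(z') S(z,dz') ≤ C₁` and `|Sⁿ − σ|(z,B) ≤ C₁ ρⁿ` for all `z`, Borel `B` and `n ≥ 0`. -/
theorem joint_chain_geometric_ergodicity
    (XS : Set (Fin dx → ℝ)) (YS : Set (Fin dy → ℝ))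
    (hXS : MeasurableSet XS) (hYS : MeasurableSet YS)
    (ψ : YS → ℝ) (hψpos : ∀ y, 0 < ψ y) (hψm : Measurable ψ)
    -- Assumption 5
    (P : XS → Measure XS) (Q : XS → Measure YS)
    (hPm : Measurable P) (hQm : Measurable Q)
    (hPprob : ∀ x, IsProbabilityMeasure (P x))
    (hQprob : ∀ x, IsProbabilityMeasure (Q x))
    (K : ℝ) (hK : 1 ≤ K) (ρ : ℝ) (hρ : ρ ∈ Set.Ioo (0 : ℝ) 1)
    (πm : Measure XS) (hπm : IsProbabilityMeasure πm)
    (hQψ : ∀ x, ∫⁻ y, ENNReal.ofReal (ψ y) ∂(Q x) ≤ ENNReal.ofReal K)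
    (hPerg : ∀ x, ∀ n : ℕ, ∀ B : Set XS, MeasurableSet B →
      |(kernelIter P n x B).toReal - (πm B).toReal| ≤ K * ρ ^ n) :
    ∃ C₁ : ℝ, 1 ≤ C₁ ∧
      (∀ z : YS × XS,
        ∫⁻ z', ENNReal.ofReal (1 + ψ z'.1) ∂(Skernel XS YS P Q z) ≤ ENNReal.ofReal C₁) ∧
      (∀ z : YS × XS, ∀ n : ℕ, ∀ B : Set (YS × XS), MeasurableSet B →
        setVar
          (fun A => ((kernelIter (Skernel XS YS P Q) n z A).toReal
            - (sigmaJoint XS YS Q πm A).toReal : ℝ)) B ≤ C₁ * ρ ^ n) := by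
  classical
  obtain ⟨hρ0, hρ1⟩ := hρ
  set g : XS → Measure (YS × XS) := fun x => (Q x).map fun y => (y, x) with hg
  -- measurability of the kernel `g`
  have hgm : Measurable g := by
    apply Measure.measurable_of_measurable_coe
    intro s hs
    have hswap : MeasurableSet (Prod.swap ⁻¹' s : Set (XS × YS)) := measurable_swap hs
    haveI : ProbabilityTheory.IsMarkovKernel (⟨Q, hQm⟩ : ProbabilityTheory.Kernel XS YS) :=
      ⟨fun a => hQprob a⟩
    have hmk := ProbabilityTheory.Kernel.measurable_kernel_prodMk_left
      (κ := (⟨Q, hQm⟩ : ProbabilityTheory.Kernel XS YS)) hswap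
    have hgs : ∀ x, g x s = Q x ((fun y => (y, x)) ⁻¹' s) := fun x =>
      Measure.map_apply measurable_prodMk_right hs
    simp only [hgs]
    exact hmk
  have hgp : ∀ x, IsProbabilityMeasure (g x) := fun x => by
    haveI := hQprob x
    exact Measure.isProbabilityMeasure_map measurable_prodMk_right.aemeasurable
  have hSdef : ∀ z : YS × XS, Skernel XS YS P Q z = (P z.2).bind g := fun z => rfl
  -- measurability and mass of the iterates of `P`
  have hPim : ∀ n, Measurable (kernelIter P n) := by
    intro n
    induction n with
    | zero => exact Measure.measurable_dirac
    | succ n ih => exact (Measure.measurable_bind' ih).comp hPm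
  have hPip : ∀ n x, IsProbabilityMeasure (kernelIter P n x) := by
    intro n
    induction n with
    | zero => intro x; exact Measure.dirac.isProbabilityMeasure
    | succ n ih =>
      intro x
      haveI := hPprob x
      exact isProbabilityMeasure_bind _ (hPim n) (ih)
  -- the iterates of `S` are driven by the iterates of `P`
  have hiter : ∀ n (z : YS × XS),
      kernelIter (Skernel XS YS P Q) (n + 1) z = (kernelIter P (n + 1) z.2).bind g := by
    intro n
    induction n with
    | zero =>
      intro z
      show (Skernel XS YS P Q z).bind (fun w => Measure.dirac w) = _
      rw [Measure.bind_dirac, hSdef z]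
      congr 1
      show P z.2 = (P z.2).bind (fun x => Measure.dirac x)
      rw [Measure.bind_dirac]
    | succ n ih =>
      intro z
      have hGm : Measurable fun w : YS × XS => (kernelIter P (n + 1) w.2).bind g :=
        (Measure.measurable_bind' hgm).comp ((hPim (n + 1)).comp measurable_snd)
      have h1 : kernelIter (Skernel XS YS P Q) (n + 1)
          = fun w : YS × XS => (kernelIter P (n + 1) w.2).bind g := funext ih
      show (Skernel XS YS P Q z).bind (kernelIter (Skernel XS YS P Q) (n + 1)) = _
      rw [h1, hSdef z, Measure.bind_bind hgm.aemeasurable hGm.aemeasurable]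
      have hinner : ∀ x' : XS, (g x').bind (fun w : YS × XS => (kernelIter P (n + 1) w.2).bind g)
          = (kernelIter P (n + 1) x').bind g := by
        intro x'
        show ((Q x').map (fun y => (y, x'))).bind _ = _
        rw [← Measure.bind_dirac_eq_map (Q x') measurable_prodMk_right,
          Measure.bind_bind (f := fun y : YS => Measure.dirac ((y, x') : YS × XS))
            (Measure.measurable_dirac.comp measurable_prodMk_right).aemeasurable hGm.aemeasurable]
        have hd : ∀ y : YS, (Measure.dirac ((y, x') : YS × XS)).bind
            (fun w : YS × XS => (kernelIter P (n + 1) w.2).bind g)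
            = (kernelIter P (n + 1) x').bind g := fun y => Measure.dirac_bind hGm _
        simp only [hd]
        haveI := hQprob x'
        rw [Measure.bind_const, measure_univ, one_smul]
      simp only [hinner]
      exact (Measure.bind_bind (hPim (n + 1)).aemeasurable hgm.aemeasurable).symm
  set σm : Measure (YS × XS) := sigmaJoint XS YS Q πm with hσ
  have hσdef : σm = πm.bind g := rfl
  haveI hσp : IsProbabilityMeasure σm := by
    rw [hσdef]; exact isProbabilityMeasure_bind _ hgm hgp
  -- the pointwise geometric ergodicity bound for the joint chain
  have htr : ∀ (μ : Measure (YS × XS)) [IsProbabilityMeasure μ] (B : Set (YS × XS)),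
      (μ B).toReal ≤ 1 := by
    intro μ hμ B
    calc (μ B).toReal ≤ (1 : ℝ≥0∞).toReal := ENNReal.toReal_mono ENNReal.one_ne_top prob_le_one
    _ = 1 := ENNReal.toReal_one
  have hpt : ∀ (z : YS × XS) (n : ℕ) (B : Set (YS × XS)), MeasurableSet B →
      |(kernelIter (Skernel XS YS P Q) n z B).toReal - (σm B).toReal| ≤ K * ρ ^ n := by
    intro z n B hB
    cases n with
    | zero =>
      have h1 : (kernelIter (Skernel XS YS P Q) 0 z B).toReal ≤ 1 := by
        show (Measure.dirac z B).toReal ≤ 1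
        exact htr _ B
      have h2 : (σm B).toReal ≤ 1 := htr _ B
      have h3 : 0 ≤ (kernelIter (Skernel XS YS P Q) 0 z B).toReal := ENNReal.toReal_nonneg
      have h4 : 0 ≤ (σm B).toReal := ENNReal.toReal_nonneg
      rw [pow_zero, mul_one]
      rw [abs_le]
      constructor <;> linarith
    | succ n =>
      haveI := hPip (n + 1) z.2
      have hfm : Measurable fun x : XS => g x B := (Measure.measurable_coe hB).comp hgm
      have hf1 : ∀ x : XS, g x B ≤ 1 := fun x => by
        haveI := hgp x; exact prob_le_one
      have hSB : kernelIter (Skernel XS YS P Q) (n + 1) z B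
          = ∫⁻ x, g x B ∂(kernelIter P (n + 1) z.2) := by
        rw [hiter n z]
        exact Measure.bind_apply hB hgm.aemeasurable
      have hσB : σm B = ∫⁻ x, g x B ∂πm := by
        rw [hσdef]
        exact Measure.bind_apply hB hgm.aemeasurable
      rw [hSB, hσB, abs_sub_le_iff]
      constructor
      · refine lintegral_toReal_sub_le _ _ ?_ hfm hf1
        intro D hD
        exact (abs_sub_le_iff.mp (hPerg z.2 (n + 1) D hD)).1
      · refine lintegral_toReal_sub_le _ _ ?_ hfm hf1
        intro D hD
        exact (abs_sub_le_iff.mp (hPerg z.2 (n + 1) D hD)).2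
  -- choose the constant
  refine ⟨2 * K + 1, by linarith, ?_, ?_⟩
  · -- the `ψ̃` moment bound
    intro z
    have hfm : Measurable fun z' : YS × XS => ENNReal.ofReal (1 + ψ z'.1) :=
      (measurable_const.add (hψm.comp measurable_fst)).ennreal_ofReal
    rw [hSdef z, Measure.lintegral_bind hgm.aemeasurable hfm.aemeasurable]
    have hinner : ∀ x' : XS,
        ∫⁻ w, ENNReal.ofReal (1 + ψ w.1) ∂(g x') ≤ ENNReal.ofReal (1 + K) := by
      intro x'
      haveI := hQprob x'
      show ∫⁻ w, ENNReal.ofReal (1 + ψ w.1) ∂((Q x').map fun y => (y, x')) ≤ _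
      rw [lintegral_map hfm measurable_prodMk_right]
      calc ∫⁻ y, ENNReal.ofReal (1 + ψ y) ∂(Q x')
          = ∫⁻ y, (1 + ENNReal.ofReal (ψ y)) ∂(Q x') := by
            refine lintegral_congr fun y => ?_
            rw [ENNReal.ofReal_add zero_le_one (hψpos y).le, ENNReal.ofReal_one]
        _ = 1 + ∫⁻ y, ENNReal.ofReal (ψ y) ∂(Q x') := by
            rw [lintegral_add_left measurable_const]
            simp
        _ ≤ 1 + ENNReal.ofReal K := add_le_add_right (hQψ x') _
        _ = ENNReal.ofReal (1 + K) := by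
            rw [ENNReal.ofReal_add zero_le_one (le_trans zero_le_one hK), ENNReal.ofReal_one]
    haveI := hPprob z.2
    calc ∫⁻ x', ∫⁻ w, ENNReal.ofReal (1 + ψ w.1) ∂(g x') ∂(P z.2)
        ≤ ∫⁻ _, ENNReal.ofReal (1 + K) ∂(P z.2) := lintegral_mono hinner
      _ = ENNReal.ofReal (1 + K) := by simp
      _ ≤ ENNReal.ofReal (2 * K + 1) := ENNReal.ofReal_le_ofReal (by linarith)
  · -- the total variation bound
    intro z n B hB
    haveI := hPip n z.2
    haveI : IsProbabilityMeasure (kernelIter (Skernel XS YS P Q) n z) := by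
      cases n with
      | zero => exact Measure.dirac.isProbabilityMeasure
      | succ n =>
        rw [hiter n z]
        haveI := hPip (n + 1) z.2
        exact isProbabilityMeasure_bind _ hgm hgp
    have hbound := setVar_sub_le (kernelIter (Skernel XS YS P Q) n z) σm
      (by positivity) (fun D hD => hpt z n D hD) B
    calc setVar (fun A => ((kernelIter (Skernel XS YS P Q) n z A).toReal
          - (σm A).toReal : ℝ)) B
        ≤ 2 * (K * ρ ^ n) := hbound
      _ ≤ (2 * K + 1) * ρ ^ n := by nlinarith [pow_nonneg hρ0.le n]

end Stmt6
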